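/- Let μ ∈ ℝ, 0 < β₊ < 1, 0 < β₋ < 1, α₊ ≥ 0, α₋ ≥ 0, λ₊ > 0, λ₋ > 0, and let Ψ be the GTS characteristic exponent Ψ(ξ) = iμξ + α₊·Γ(−β₊)·((λ₊ − iξ)^{β₊} − λ₊^{β₊}) + α₋·Γ(−β₋)·((λ₋ + iξ)^{β₋} − λ₋^{β₋}). Define the cumulants κ₁ = μ + α₊·Γ(1−β₊)/λ₊^{1−β₊} − α₋·Γ(1−β₋)/λ₋^{1−β₋} and, for k ≥ 2, κ_k = α₊·Γ(k−β₊)/λ₊^{k−β₊} + (−1)^k·α₋·Γ(k−β₋)/λ₋^{k−β₋}. Then for every real ξ with |ξ| < min(λ₊, λ₋), the series Σ_{k=1}^∞ (κ_k/k!)·(iξ)^k converges and Ψ(ξ) = Σ_{k=1}^∞ (κ_k/k!)·(iξ)^k. -/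

import Mathlib

open Complex Finset

lemma iter_cpow (β : ℂ) (l : ℝ) (hl : 0 < l) :
    ∀ n : ℕ, ∀ w : ℂ, 0 < ((l : ℂ) + w).re →
      iteratedDeriv n (fun z : ℂ => ((l : ℂ) + z) ^ β) w
        = (∏ j ∈ Finset.range n, (β - j)) * ((l : ℂ) + w) ^ (β - n) := by
  intro n
  induction n with
  | zero => intro w hw; simp
  | succ n ih =>
    intro w hw
    have hopen : IsOpen {w : ℂ | 0 < ((l : ℂ) + w).re} := by
      have : Continuous fun w : ℂ => ((l : ℂ) + w).re := by fun_prop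
      exact isOpen_lt continuous_const this
    have hev : (iteratedDeriv n (fun z : ℂ => ((l : ℂ) + z) ^ β))
        =ᶠ[nhds w] (fun w => (∏ j ∈ Finset.range n, (β - j)) * ((l : ℂ) + w) ^ (β - n)) := by
      filter_upwards [hopen.mem_nhds hw] with x hx
      exact ih x hx
    rw [iteratedDeriv_succ, hev.deriv_eq]
    have hd : HasDerivAt (fun w : ℂ => ((l : ℂ) + w) ^ (β - n))
        ((β - n) * ((l : ℂ) + w) ^ (β - n - 1) * 1) w := by
      refine HasDerivAt.cpow_const ?_ ?_
      · exact (hasDerivAt_id w).const_add _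
      · exact Or.inl hw
    rw [(hd.const_mul _).deriv, Finset.prod_range_succ]
    have he : β - ((n : ℂ) + 1) = β - n - 1 := by ring
    push_cast
    rw [he]
    ring

lemma cpow_hasSum (β : ℂ) (l : ℝ) (hl : 0 < l) (z : ℂ) (hz : ‖z‖ < l) :
    HasSum (fun n : ℕ => ((n.factorial : ℂ))⁻¹
        * ((∏ j ∈ Finset.range n, (β - j)) * (l : ℂ) ^ (β - n)) * z ^ n)
      (((l : ℂ) + z) ^ β) := by
  have key : ∀ w ∈ Metric.ball (0 : ℂ) l, 0 < ((l : ℂ) + w).re := by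
    intro w hw
    simp only [Metric.mem_ball, dist_zero_right] at hw
    have := abs_re_le_norm w
    simp only [Complex.add_re, Complex.ofReal_re]
    have : -w.re ≤ ‖w‖ := by
      simpa using (neg_le_abs w.re).trans (abs_re_le_norm w)
    linarith
  have hdiff : DifferentiableOn ℂ (fun z : ℂ => ((l : ℂ) + z) ^ β) (Metric.ball 0 l) := by
    intro w hw
    have hd : HasDerivAt (fun w : ℂ => ((l : ℂ) + w) ^ β)
        (β * ((l : ℂ) + w) ^ (β - 1) * 1) w :=
      HasDerivAt.cpow_const ((hasDerivAt_id w).const_add _) (Or.inl (key w hw))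
    exact hd.differentiableAt.differentiableWithinAt
  have hz' : z ∈ Metric.ball (0 : ℂ) l := by
    simpa [Metric.mem_ball, dist_zero_right] using hz
  have H := Complex.hasSum_taylorSeries_on_ball hdiff hz'
  simp only [sub_zero] at H
  convert H using 2 with n
  · rfl
  rw [iter_cpow β l hl n 0 (by simpa using hl)]
  simp only [smul_eq_mul]
  ring

lemma gamma_coeff (β : ℝ) (hβ0 : 0 < β) (hβ1 : β < 1) (n : ℕ) :
    (Real.Gamma (-β) : ℂ) * (∏ j ∈ Finset.range n, ((β : ℂ) - j))
      = (-1) ^ n * (Real.Gamma ((n : ℝ) - β) : ℂ) := by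
  induction n with
  | zero => simp
  | succ n ih =>
    have hne : (n : ℝ) - β ≠ 0 := by
      rcases Nat.eq_zero_or_pos n with h | h
      · subst h; simpa using hβ0.ne'
      · have h1 : (1 : ℝ) ≤ n := by exact_mod_cast h
        have : 0 < (n : ℝ) - β := by linarith
        exact this.ne'
    have hG : Real.Gamma (((n : ℝ) - β) + 1) = ((n : ℝ) - β) * Real.Gamma ((n : ℝ) - β) :=
      Real.Gamma_add_one hne
    have hcast : ((n + 1 : ℕ) : ℝ) - β = ((n : ℝ) - β) + 1 := by push_cast; ring
    rw [Finset.prod_range_succ, ← mul_assoc, ih, hcast, hG]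
    push_cast
    ring

lemma part_hasSum (β l : ℝ) (hβ0 : 0 < β) (hβ1 : β < 1) (hl : 0 < l)
    (z : ℂ) (hz : ‖z‖ < l) :
    HasSum (fun k : ℕ =>
        ((Real.Gamma (((k + 1 : ℕ) : ℝ) - β) * l ^ (β - ((k + 1 : ℕ) : ℝ))
            / (k + 1 : ℕ).factorial : ℝ) : ℂ) * (-z) ^ (k + 1))
      ((Real.Gamma (-β) : ℂ) * (((l : ℂ) + z) ^ (β : ℂ) - (l : ℂ) ^ (β : ℂ))) := by
  set f : ℕ → ℂ := fun n =>
    ((Real.Gamma ((n : ℝ) - β) * l ^ (β - (n : ℝ)) / n.factorial : ℝ) : ℂ) * (-z) ^ n with hf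
  have hpow : ∀ n : ℕ, ((l ^ (β - (n : ℝ)) : ℝ) : ℂ) = (l : ℂ) ^ ((β : ℂ) - (n : ℂ)) := by
    intro n
    rw [Complex.ofReal_cpow hl.le]
    push_cast
    ring_nf
  have H2 : HasSum f ((Real.Gamma (-β) : ℂ) * ((l : ℂ) + z) ^ (β : ℂ)) := by
    have H := (cpow_hasSum (β : ℂ) l hl z hz).mul_left (Real.Gamma (-β) : ℂ)
    convert H using 2 with n
    · rfl
    have : (Real.Gamma (-β) : ℂ) * (((n.factorial : ℂ))⁻¹
        * ((∏ j ∈ Finset.range n, ((β : ℂ) - j)) * (l : ℂ) ^ ((β : ℂ) - n)) * z ^ n)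
        = ((Real.Gamma (-β) : ℂ) * (∏ j ∈ Finset.range n, ((β : ℂ) - j)))
          * (((n.factorial : ℂ))⁻¹ * (l : ℂ) ^ ((β : ℂ) - n) * z ^ n) := by ring
    rw [this, gamma_coeff β hβ0 hβ1 n, ← hpow n, hf, neg_pow]
    push_cast
    ring
  have H3 := (hasSum_nat_add_iff' 1).2 H2
  have hf0 : ∑ i ∈ Finset.range 1, f i = (Real.Gamma (-β) : ℂ) * (l : ℂ) ^ (β : ℂ) := by
    simp only [Finset.sum_range_one, hf, Nat.cast_zero, zero_sub, sub_zero, pow_zero,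
      Nat.factorial_zero, Nat.cast_one, div_one, mul_one, Complex.ofReal_mul]
    rw [Complex.ofReal_cpow hl.le]
  rw [hf0] at H3
  convert H3 using 1
  · rfl
  ring

theorem gts_cumulant_series (μ βp βm αp αm lp lm : ℝ)
    (hβp0 : 0 < βp) (hβp1 : βp < 1) (hβm0 : 0 < βm) (hβm1 : βm < 1)
    (hαp : 0 ≤ αp) (hαm : 0 ≤ αm) (hlp : 0 < lp) (hlm : 0 < lm)
    (Ψ : ℝ → ℂ)
    (hΨ : ∀ ξ : ℝ, Ψ ξ = Complex.I * μ * ξ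
        + αp * Real.Gamma (-βp)
            * (((lp : ℂ) - Complex.I * ξ) ^ (βp : ℂ) - (lp : ℂ) ^ (βp : ℂ))
        + αm * Real.Gamma (-βm)
            * (((lm : ℂ) + Complex.I * ξ) ^ (βm : ℂ) - (lm : ℂ) ^ (βm : ℂ)))
    (κ : ℕ → ℝ)
    (hκ1 : κ 1 = μ + αp * Real.Gamma (1 - βp) / lp ^ (1 - βp)
        - αm * Real.Gamma (1 - βm) / lm ^ (1 - βm))
    (hκ : ∀ k : ℕ, 2 ≤ k →
        κ k = αp * Real.Gamma ((k : ℝ) - βp) / lp ^ ((k : ℝ) - βp)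
          + (-1 : ℝ) ^ k * αm * Real.Gamma ((k : ℝ) - βm) / lm ^ ((k : ℝ) - βm))
    (ξ : ℝ) (hξ : |ξ| < min lp lm) :
    Summable (fun k : ℕ =>
        ((κ (k + 1) / (k + 1 : ℕ).factorial : ℝ) : ℂ) * (Complex.I * ξ) ^ (k + 1)) ∧
      Ψ ξ = ∑' k : ℕ,
          ((κ (k + 1) / (k + 1 : ℕ).factorial : ℝ) : ℂ) * (Complex.I * ξ) ^ (k + 1) := by
  have hnorm : ‖Complex.I * (ξ : ℂ)‖ = |ξ| := by
    simp
  have hξp : ‖-(Complex.I * (ξ : ℂ))‖ < lp := by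
    rw [norm_neg, hnorm]; exact hξ.trans_le (min_le_left _ _)
  have hξm : ‖Complex.I * (ξ : ℂ)‖ < lm := by
    rw [hnorm]; exact hξ.trans_le (min_le_right _ _)
  have Hp := (part_hasSum βp lp hβp0 hβp1 hlp (-(Complex.I * (ξ : ℂ))) hξp).mul_left (αp : ℂ)
  have Hm := (part_hasSum βm lm hβm0 hβm1 hlm (Complex.I * (ξ : ℂ)) hξm).mul_left (αm : ℂ)
  have Hμ : HasSum (fun k : ℕ => if k = 0 then Complex.I * μ * ξ else 0)
      (Complex.I * μ * ξ) := hasSum_ite_eq 0 _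
  have Htot := (Hμ.add Hp).add Hm
  have hfun : (fun k : ℕ =>
      ((κ (k + 1) / (k + 1 : ℕ).factorial : ℝ) : ℂ) * (Complex.I * ξ) ^ (k + 1))
      = fun k : ℕ =>
        ((if k = 0 then Complex.I * μ * ξ else 0)
          + (αp : ℂ) * (((Real.Gamma (((k + 1 : ℕ) : ℝ) - βp)
              * lp ^ (βp - ((k + 1 : ℕ) : ℝ)) / (k + 1 : ℕ).factorial : ℝ) : ℂ)
                * (- -(Complex.I * (ξ : ℂ))) ^ (k + 1)))
          + (αm : ℂ) * (((Real.Gamma (((k + 1 : ℕ) : ℝ) - βm)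
              * lm ^ (βm - ((k + 1 : ℕ) : ℝ)) / (k + 1 : ℕ).factorial : ℝ) : ℂ)
                * (-(Complex.I * (ξ : ℂ))) ^ (k + 1)) := by
    funext k
    have hrp : ∀ (l β x : ℝ), 0 < l → l ^ (β - x) = (l ^ (x - β))⁻¹ := by
      intro l β x hl
      rw [show β - x = -(x - β) by ring, Real.rpow_neg hl.le]
    rcases Nat.eq_zero_or_pos k with hk | hk
    · subst hk
      rw [hκ1]
      simp only [if_pos, neg_neg]
      norm_num
      rw [hrp lp βp 1 hlp, hrp lm βm 1 hlm]
      push_cast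
      ring
    · have hk2 : 2 ≤ k + 1 := by omega
      rw [hκ (k + 1) hk2, if_neg (by omega)]
      rw [hrp lp βp ((k+1:ℕ):ℝ) hlp, hrp lm βm ((k+1:ℕ):ℝ) hlm]
      push_cast
      ring
  rw [hfun]
  refine ⟨Htot.summable, ?_⟩
  rw [Htot.tsum_eq, hΨ ξ]
  ring_nf
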